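/- (Twisted Fischer–Koch configurations, positive center) For every integer k ≥ 4, the configuration consisting of k + 1 points, namely the origin 0 with charge +1 together with the k points √((k−3)/2) · e^{2πim/k}, m = 0, …, k−1, each with charge −1, is balanced. -/

import Mathlib

/-- The force at a point of a configuration: `F j = conj (p j) + ∑_{k ≠ j} ε k / (p j - p k)`. -/
noncomputable def force {ι : Type*} [Fintype ι] [DecidableEq ι]
    (p ε : ι → ℂ) (j : ι) : ℂ :=
  (starRingEnd ℂ) (p j) + ∑ k ∈ Finset.univ.erase j, ε k / (p j - p k)

/-- A configuration is balanced if all forces vanish. -/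
def IsBalancedConfig {ι : Type*} [Fintype ι] [DecidableEq ι] (p ε : ι → ℂ) : Prop :=
  ∀ j, force p ε j = 0

lemma pair_sum {z : ℂ} (hz1 : z ≠ 1) (hz0 : z ≠ 0) :
    (1 - z)⁻¹ + (1 - z⁻¹)⁻¹ = 1 := by
  have h : (1 : ℂ) - z ≠ 0 := sub_ne_zero.mpr (fun h => hz1 h.symm)
  have h2 : (1 : ℂ) - z⁻¹ ≠ 0 := by
    rw [sub_ne_zero]
    intro h'
    exact hz1 (by rw [← inv_inv z, ← h', inv_one])
  have h3 : z - 1 ≠ 0 := sub_ne_zero.mpr hz1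
  field_simp
  ring

lemma sum_inv_one_sub (k : ℕ) (hk : 1 < k) {ζ : ℂ} (hζ : IsPrimitiveRoot ζ k) :
    ∑ j : Fin k, (1 - ζ ^ (j : ℕ))⁻¹ = ((k : ℂ) - 1) / 2 := by
  haveI : NeZero k := ⟨by omega⟩
  set S := ∑ j : Fin k, (1 - ζ ^ (j : ℕ))⁻¹ with hS
  have hζk : ζ ^ k = 1 := hζ.pow_eq_one
  have hζ0 : ζ ≠ 0 := hζ.ne_zero (by omega)
  have hneg : S = ∑ j : Fin k, (1 - ζ ^ (((-j) : Fin k) : ℕ))⁻¹ :=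
    (Equiv.sum_comp (Equiv.neg (Fin k)) (fun j => (1 - ζ ^ (j : ℕ))⁻¹)).symm
  have key : S + S = (k : ℂ) - 1 := by
    nth_rewrite 2 [hneg]
    rw [hS, ← Finset.sum_add_distrib]
    have step : ∀ j : Fin k, (1 - ζ ^ (j : ℕ))⁻¹ + (1 - ζ ^ (((-j) : Fin k) : ℕ))⁻¹
        = 1 - (if j = 0 then 1 else 0) := by
      intro j
      by_cases hj : j = 0
      · simp [hj]
      · rw [if_neg hj, sub_zero]
        have hjv : 0 < (j : ℕ) :=
          Nat.pos_of_ne_zero (fun h => hj (Fin.ext (by simpa using h)))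
        have hjlt : (j : ℕ) < k := j.isLt
        have hval : (((-j) : Fin k) : ℕ) = k - (j : ℕ) := by
          rw [Fin.coe_neg, Nat.mod_eq_of_lt (by omega)]
        have hz1 : ζ ^ (j : ℕ) ≠ 1 := hζ.pow_ne_one_of_pos_of_lt hjv.ne' hjlt
        have hz0 : ζ ^ (j : ℕ) ≠ 0 := pow_ne_zero _ hζ0
        have hinv : ζ ^ (((-j) : Fin k) : ℕ) = (ζ ^ (j : ℕ))⁻¹ := by
          rw [hval]
          refine eq_inv_of_mul_eq_one_right ?_
          rw [← pow_add, Nat.add_sub_cancel' hjlt.le, hζk]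
        rw [hinv]
        exact pair_sum hz1 hz0
    rw [Finset.sum_congr rfl (fun j _ => step j), Finset.sum_sub_distrib,
      Finset.sum_ite_eq' Finset.univ (0 : Fin k) (fun _ => (1 : ℂ))]
    simp [Finset.card_univ]
  linear_combination key / 2

/-- (Twisted Fischer–Koch, positive center) For `k ≥ 4`, the configuration of the origin
with charge `+1` together with the `k` points `√((k-3)/2) · e^{2πim/k}`, `m = 0, …, k-1`,
each with charge `-1`, is balanced.  (The index `none` is the origin.) -/
theorem fischerKoch_pos_center_balanced (k : ℕ) (hk : 4 ≤ k) :
    IsBalancedConfig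
      (fun i : Option (Fin k) =>
        match i with
        | none => 0
        | some m =>
            (Real.sqrt (((k : ℝ) - 3) / 2) : ℂ) *
              Complex.exp (2 * Real.pi * Complex.I / k) ^ (m : ℕ))
      (fun i : Option (Fin k) =>
        match i with
        | none => 1
        | some _ => -1) := by
  intro j
  unfold force
  have hk0 : k ≠ 0 := by omega
  haveI : NeZero k := ⟨hk0⟩
  set ζ : ℂ := Complex.exp (2 * Real.pi * Complex.I / k) with hζdef
  have hζ : IsPrimitiveRoot ζ k := Complex.isPrimitiveRoot_exp k hk0
  have hζk : ζ ^ k = 1 := hζ.pow_eq_one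
  have hζ0 : ζ ≠ 0 := hζ.ne_zero hk0
  set r : ℂ := (Real.sqrt (((k : ℝ) - 3) / 2) : ℂ) with hrdef
  have hpos : (0:ℝ) < ((k : ℝ) - 3) / 2 := by
    have : (4:ℝ) ≤ k := by exact_mod_cast hk
    linarith
  have hr0 : r ≠ 0 := by
    rw [hrdef]
    exact_mod_cast Complex.ofReal_ne_zero.mpr (ne_of_gt (Real.sqrt_pos.mpr hpos))
  have hr2 : r ^ 2 = ((k : ℂ) - 3) / 2 := by
    rw [hrdef, ← Complex.ofReal_pow, Real.sq_sqrt hpos.le]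
    push_cast
    ring
  match j with
  | none =>
    rw [Finset.sum_erase_eq_sub (Finset.mem_univ none), Fintype.sum_option]
    simp only [map_zero, zero_sub, sub_zero, sub_self, div_zero, zero_add]
    have hterm : ∀ m : Fin k, (-1 : ℂ) / -(r * ζ ^ (m:ℕ)) = r⁻¹ * (ζ⁻¹) ^ (m:ℕ) := by
      intro m
      rw [div_neg, neg_div, neg_neg, one_div, mul_inv, inv_pow]
    rw [Finset.sum_congr rfl (fun m _ => hterm m), ← Finset.mul_sum,
      Fin.sum_univ_eq_sum_range, hζ.inv.geom_sum_eq_zero (by omega)]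
    simp
  | some m =>
    rw [Finset.sum_erase_eq_sub (Finset.mem_univ (some m)), Fintype.sum_option]
    set c : ℂ := ζ ^ (m:ℕ) with hcdef
    have hc0 : c ≠ 0 := pow_ne_zero _ hζ0
    have hnorm : ‖c‖ = 1 := by
      rw [hcdef, norm_pow, hζ.norm'_eq_one hk0, one_pow]
    have hconj : (starRingEnd ℂ) (r * c) = r * c⁻¹ := by
      rw [map_mul, hrdef, Complex.conj_ofReal, Complex.inv_eq_conj hnorm]
    have hsum : ∑ m' : Fin k, (-1 : ℂ) / (r * c - r * ζ ^ (m':ℕ))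
        = -((r * c)⁻¹ * (((k:ℂ) - 1) / 2)) := by
      rw [← Equiv.sum_comp (Equiv.addLeft m) (fun m' : Fin k => (-1 : ℂ) / (r * c - r * ζ ^ (m':ℕ)))]
      have hterm : ∀ x : Fin k, (-1 : ℂ) / (r * c - r * ζ ^ (((m + x : Fin k)):ℕ))
          = -((r * c)⁻¹ * (1 - ζ ^ (x:ℕ))⁻¹) := by
        intro x
        have hp : ζ ^ (((m + x : Fin k)):ℕ) = c * ζ ^ (x:ℕ) := by
          rw [Fin.val_add, ← pow_eq_pow_mod _ hζk, pow_add, hcdef]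
        rw [hp, show r * c - r * (c * ζ ^ (x:ℕ)) = (r * c) * (1 - ζ ^ (x:ℕ)) by ring,
          neg_div, one_div, mul_inv]
      simp only [Equiv.coe_addLeft]
      rw [Finset.sum_congr rfl (fun x _ => hterm x), Finset.sum_neg_distrib,
        ← Finset.mul_sum, sum_inv_one_sub k (by omega) hζ]
    rw [hsum, hconj]
    rw [sub_zero, sub_self, div_zero, sub_zero, one_div]
    field_simp
    ring_nf
    linear_combination (2 * c) * hr2
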